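/- Let k, k_U be nonnegative kernels on ℝ^D, and let y_1,...,y_N ∈ ℝ^D with ‖y_i‖ ≤ R. Let K and K_U be the N×N Gram matrices with entries K_{ij} = k(y_i,y_j) and (K_U)_{ij} = k_U(y_i,y_j). Let κ_min = min_i (1/N) Σ_j k(y_i, y_j), and assume κ_min > 0 and that every row of K − K_U has ℓ2 norm at most √N κ_min / 2. Then the average squared distortion of the projected attractive field on the support satisfies (1/N) Σ_{i=1}^N ‖V_U⁺(y_i) − V⁺(y_i)‖² ≤ (16 R² / (N² κ_min²)) ‖K − K_U‖_F², where V⁺ and V_U⁺ are the attractive fields defined via the k- and k_U-weighted barycenters of the y_j. -/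

import Mathlib

open BigOperators Finset

lemma sum_abs_le_sqrt_card_mul {N : ℕ} (f : Fin N → ℝ) :
    ∑ j, |f j| ≤ Real.sqrt N * Real.sqrt (∑ j, f j ^ 2) := by
  have h1 : (∑ j, |f j|) ^ 2 ≤ N * ∑ j, f j ^ 2 := by
    have := sq_sum_le_card_mul_sum_sq (s := (univ : Finset (Fin N))) (f := fun j => |f j|)
    simpa [sq_abs] using this
  have hnn : (0:ℝ) ≤ ∑ j, |f j| := Finset.sum_nonneg fun j _ => abs_nonneg _
  calc ∑ j, |f j| = Real.sqrt ((∑ j, |f j|) ^ 2) := (Real.sqrt_sq hnn).symm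
    _ ≤ Real.sqrt (N * ∑ j, f j ^ 2) := Real.sqrt_le_sqrt h1
    _ = Real.sqrt N * Real.sqrt (∑ j, f j ^ 2) := Real.sqrt_mul (by positivity) _

lemma pointwise_bound {D N : ℕ} (hN : 0 < N) (y : Fin N → EuclideanSpace ℝ (Fin D))
    (R κ : ℝ) (hy : ∀ j, ‖y j‖ ≤ R) (a b : Fin N → ℝ)
    (ha : ∀ j, 0 ≤ a j) (hb : ∀ j, 0 ≤ b j) (hκpos : 0 < κ)
    (hA : (N:ℝ) * κ ≤ ∑ j, a j)
    (hδ : Real.sqrt (∑ j, (a j - b j) ^ 2) ≤ Real.sqrt N * κ / 2) :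
    ‖(∑ j, b j)⁻¹ • (∑ j, b j • y j) - (∑ j, a j)⁻¹ • (∑ j, a j • y j)‖ ^ 2
      ≤ 16 * R ^ 2 / ((N:ℝ) * κ ^ 2) * ∑ j, (a j - b j) ^ 2 := by
  set A := ∑ j, a j with hAdef
  set B := ∑ j, b j with hBdef
  set S := Real.sqrt (∑ j, (a j - b j) ^ 2) with hSdef
  have hSnn : 0 ≤ S := Real.sqrt_nonneg _
  have hS2 : S ^ 2 = ∑ j, (a j - b j) ^ 2 := Real.sq_sqrt (by positivity)
  have hR : 0 ≤ R := le_trans (norm_nonneg _) (hy ⟨0, hN⟩)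
  have hNpos : (0:ℝ) < N := by exact_mod_cast hN
  have hApos : 0 < A := lt_of_lt_of_le (by positivity) hA
  have hsumabs : ∑ j, |a j - b j| ≤ Real.sqrt N * S :=
    sum_abs_le_sqrt_card_mul _
  have habsAB : |A - B| ≤ Real.sqrt N * S := by
    calc |A - B| = |∑ j, (a j - b j)| := by rw [hAdef, hBdef, ← Finset.sum_sub_distrib]
      _ ≤ ∑ j, |a j - b j| := Finset.abs_sum_le_sum_abs _ _
      _ ≤ Real.sqrt N * S := hsumabs
  have hsqrtN : Real.sqrt N * Real.sqrt N = (N:ℝ) := Real.mul_self_sqrt (by positivity)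
  have hNk2 : Real.sqrt N * S ≤ (N:ℝ) * κ / 2 := by
    calc Real.sqrt N * S ≤ Real.sqrt N * (Real.sqrt N * κ / 2) := by
          exact mul_le_mul_of_nonneg_left hδ (Real.sqrt_nonneg _)
      _ = (Real.sqrt N * Real.sqrt N) * κ / 2 := by ring
      _ = (N:ℝ) * κ / 2 := by rw [hsqrtN]
  have hBge : (N:ℝ) * κ / 2 ≤ B := by
    have : A - B ≤ |A - B| := le_abs_self _
    nlinarith
  have hBpos : 0 < B := lt_of_lt_of_le (by positivity) hBge
  -- norm bound on the difference
  have hSa : ‖∑ j, a j • y j‖ ≤ A * R := by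
    calc ‖∑ j, a j • y j‖ ≤ ∑ j, ‖a j • y j‖ := norm_sum_le _ _
      _ ≤ ∑ j, a j * R := by
          refine Finset.sum_le_sum fun j _ => ?_
          rw [norm_smul, Real.norm_eq_abs, abs_of_nonneg (ha j)]
          exact mul_le_mul_of_nonneg_left (hy j) (ha j)
      _ = A * R := by rw [hAdef, Finset.sum_mul]
  have hdiff : ‖(∑ j, (b j - a j) • y j)‖ ≤ R * (Real.sqrt N * S) := by
    calc ‖∑ j, (b j - a j) • y j‖ ≤ ∑ j, ‖(b j - a j) • y j‖ := norm_sum_le _ _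
      _ ≤ ∑ j, |a j - b j| * R := by
          refine Finset.sum_le_sum fun j _ => ?_
          rw [norm_smul, Real.norm_eq_abs, abs_sub_comm]
          exact mul_le_mul_of_nonneg_left (hy j) (abs_nonneg _)
      _ = (∑ j, |a j - b j|) * R := by rw [Finset.sum_mul]
      _ ≤ (Real.sqrt N * S) * R := mul_le_mul_of_nonneg_right hsumabs hR
      _ = R * (Real.sqrt N * S) := by ring
  -- algebraic identity
  have hident : B⁻¹ • (∑ j, b j • y j) - A⁻¹ • (∑ j, a j • y j)
      = B⁻¹ • ((∑ j, (b j - a j) • y j) + ((A - B) / A) • (∑ j, a j • y j)) := by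
    have hA0 : A ≠ 0 := ne_of_gt hApos
    have hB0 : B ≠ 0 := ne_of_gt hBpos
    rw [smul_add, smul_smul]
    simp only [sub_smul]
    rw [Finset.sum_sub_distrib, smul_sub]
    have : B⁻¹ * ((A - B) / A) = B⁻¹ - A⁻¹ := by field_simp
    rw [this, sub_smul]
    abel
  have hnorm : ‖B⁻¹ • (∑ j, b j • y j) - A⁻¹ • (∑ j, a j • y j)‖
      ≤ B⁻¹ * (2 * R * (Real.sqrt N * S)) := by
    rw [hident, norm_smul, Real.norm_eq_abs, abs_of_pos (inv_pos.mpr hBpos)]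
    refine mul_le_mul_of_nonneg_left ?_ (by positivity)
    calc ‖(∑ j, (b j - a j) • y j) + ((A - B) / A) • (∑ j, a j • y j)‖
        ≤ ‖∑ j, (b j - a j) • y j‖ + ‖((A - B) / A) • (∑ j, a j • y j)‖ := norm_add_le _ _
      _ ≤ R * (Real.sqrt N * S) + |A - B| / A * (A * R) := by
          refine add_le_add hdiff ?_
          rw [norm_smul, Real.norm_eq_abs, abs_div, abs_of_pos hApos]
          exact mul_le_mul (le_refl _) hSa (norm_nonneg _) (by positivity)
      _ = R * (Real.sqrt N * S) + R * |A - B| := by field_simp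
      _ ≤ R * (Real.sqrt N * S) + R * (Real.sqrt N * S) :=
          add_le_add (le_refl _) (mul_le_mul_of_nonneg_left habsAB hR)
      _ = 2 * R * (Real.sqrt N * S) := by ring
  have hBinv : B⁻¹ ≤ 2 / ((N:ℝ) * κ) := by
    rw [div_eq_mul_inv]
    calc B⁻¹ ≤ ((N:ℝ) * κ / 2)⁻¹ := by
          exact inv_anti₀ (by positivity) hBge
      _ = 2 * ((N:ℝ) * κ)⁻¹ := by rw [div_eq_mul_inv, mul_inv, inv_inv]; ring
  have hfinal : ‖B⁻¹ • (∑ j, b j • y j) - A⁻¹ • (∑ j, a j • y j)‖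
      ≤ 4 * R * Real.sqrt N * S / ((N:ℝ) * κ) := by
    calc ‖B⁻¹ • (∑ j, b j • y j) - A⁻¹ • (∑ j, a j • y j)‖
        ≤ B⁻¹ * (2 * R * (Real.sqrt N * S)) := hnorm
      _ ≤ (2 / ((N:ℝ) * κ)) * (2 * R * (Real.sqrt N * S)) := by
          exact mul_le_mul_of_nonneg_right hBinv (by positivity)
      _ = 4 * R * Real.sqrt N * S / ((N:ℝ) * κ) := by ring
  calc ‖B⁻¹ • (∑ j, b j • y j) - A⁻¹ • (∑ j, a j • y j)‖ ^ 2
      ≤ (4 * R * Real.sqrt N * S / ((N:ℝ) * κ)) ^ 2 := by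
        exact pow_le_pow_left₀ (norm_nonneg _) hfinal 2
    _ = 16 * R ^ 2 * (Real.sqrt N ^ 2) * S ^ 2 / ((N:ℝ) ^ 2 * κ ^ 2) := by ring
    _ = 16 * R ^ 2 / ((N:ℝ) * κ ^ 2) * S ^ 2 := by
        rw [Real.sq_sqrt (by positivity : (0:ℝ) ≤ (N:ℝ))]
        field_simp
    _ = 16 * R ^ 2 / ((N:ℝ) * κ ^ 2) * ∑ j, (a j - b j) ^ 2 := by rw [hS2]

/-- On-support distortion of the projected attractive field: the average
squared field distortion over the support is controlled by the Frobenius norm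
of the Gram approximation error. -/
theorem on_support_field_distortion
    {D N : ℕ} (k kU : EuclideanSpace ℝ (Fin D) → EuclideanSpace ℝ (Fin D) → ℝ)
    (hk : ∀ a b, 0 ≤ k a b) (hkU : ∀ a b, 0 ≤ kU a b)
    (y : Fin N → EuclideanSpace ℝ (Fin D)) (R : ℝ)
    (hy : ∀ i, ‖y i‖ ≤ R)
    (K KU : Matrix (Fin N) (Fin N) ℝ)
    (hK : ∀ i j, K i j = k (y i) (y j))
    (hKU : ∀ i j, KU i j = kU (y i) (y j))
    (κmin : ℝ)
    (hκ : ∀ i, κmin ≤ (1 / (N : ℝ)) * ∑ j, k (y i) (y j))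
    (hκpos : 0 < κmin)
    (hrow : ∀ i, Real.sqrt (∑ j, (K i j - KU i j) ^ 2)
              ≤ Real.sqrt N * κmin / 2)
    (Vplus VUplus : EuclideanSpace ℝ (Fin D) → EuclideanSpace ℝ (Fin D))
    (hV : ∀ x, Vplus x = (∑ j, k x (y j))⁻¹ • (∑ j, k x (y j) • y j) - x)
    (hVU : ∀ x, VUplus x = (∑ j, kU x (y j))⁻¹ • (∑ j, kU x (y j) • y j) - x) :
    (1 / (N : ℝ)) * ∑ i, ‖VUplus (y i) - Vplus (y i)‖ ^ 2
      ≤ (16 * R ^ 2 / ((N : ℝ) ^ 2 * κmin ^ 2)) *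
          (∑ i, ∑ j, (K i j - KU i j) ^ 2) := by
  rcases Nat.eq_zero_or_pos N with hN0 | hN
  · subst hN0; simp
  have hNpos : (0:ℝ) < N := by exact_mod_cast hN
  have hpt : ∀ i, ‖VUplus (y i) - Vplus (y i)‖ ^ 2
      ≤ 16 * R ^ 2 / ((N:ℝ) * κmin ^ 2) * ∑ j, (K i j - KU i j) ^ 2 := by
    intro i
    have hdiff : VUplus (y i) - Vplus (y i)
        = (∑ j, kU (y i) (y j))⁻¹ • (∑ j, kU (y i) (y j) • y j)
          - (∑ j, k (y i) (y j))⁻¹ • (∑ j, k (y i) (y j) • y j) := by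
      rw [hV, hVU, sub_sub_sub_cancel_right]
    rw [hdiff]
    have hA : (N:ℝ) * κmin ≤ ∑ j, k (y i) (y j) := by
      have := hκ i
      rw [div_mul_eq_mul_div, one_mul, le_div_iff₀ hNpos] at this
      linarith [this]
    have hrowi := hrow i
    simp only [hK, hKU] at hrowi ⊢
    exact pointwise_bound hN y R κmin hy _ _ (fun j => hk _ _) (fun j => hkU _ _)
      hκpos hA hrowi
  have hsum : ∑ i, ‖VUplus (y i) - Vplus (y i)‖ ^ 2
      ≤ 16 * R ^ 2 / ((N:ℝ) * κmin ^ 2) * ∑ i, ∑ j, (K i j - KU i j) ^ 2 := by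
    rw [Finset.mul_sum]
    exact Finset.sum_le_sum fun i _ => hpt i
  calc (1 / (N:ℝ)) * ∑ i, ‖VUplus (y i) - Vplus (y i)‖ ^ 2
      ≤ (1 / (N:ℝ)) * (16 * R ^ 2 / ((N:ℝ) * κmin ^ 2) * ∑ i, ∑ j, (K i j - KU i j) ^ 2) :=
        mul_le_mul_of_nonneg_left hsum (by positivity)
    _ = (16 * R ^ 2 / ((N : ℝ) ^ 2 * κmin ^ 2)) * (∑ i, ∑ j, (K i j - KU i j) ^ 2) := by
        have h1 : (1 / (N:ℝ)) * (16 * R ^ 2 / ((N:ℝ) * κmin ^ 2))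
            = 16 * R ^ 2 / ((N:ℝ) ^ 2 * κmin ^ 2) := by
          rw [div_mul_div_comm, one_mul,
            show (N:ℝ) * ((N:ℝ) * κmin ^ 2) = (N:ℝ) ^ 2 * κmin ^ 2 from by ring]
        rw [← mul_assoc, h1]
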